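/- If ω ∈ {0,1}^∞ contains only finitely many 0's or only finitely many 1's, then there is exactly one integer t that belongs to none of the arithmetic progressions c_n^ω + 2^n ℤ, n ≥ 1; every other integer belongs to exactly one of them. -/

import Mathlib

/-!
STATEMENT 11: If ω ∈ {0,1}^∞ contains only finitely many 0's or only finitely many 1's, there
is exactly one integer t belonging to none of the progressions c_n^ω + 2^n ℤ (n ≥ 1); every
other integer belongs to exactly one of them.
-/

/-- The integers `c_n^ω` (for `n ≥ 1`; `cseq ω 0` is a junk value): if `x_n = ω (n-1) = 0`,
`c_n^ω` is the largest nonpositive integer not lying in any progression `c_k^ω + 2^k ℤ`,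
`1 ≤ k ≤ n-1`; if `x_n = 1`, it is the smallest such positive integer. -/
noncomputable def cseq (ω : ℕ → Bool) : ℕ → ℤ
  | 0 => 0
  | n + 1 =>
    if ω n = false then
      sSup {m : ℤ | m ≤ 0 ∧ ∀ k, 1 ≤ k → k ≤ n → ¬ (2 ^ k : ℤ) ∣ (m - cseq ω k)}
    else
      sInf {m : ℤ | 1 ≤ m ∧ ∀ k, 1 ≤ k → k ≤ n → ¬ (2 ^ k : ℤ) ∣ (m - cseq ω k)}


/-- Representative of the set of integers uncovered after stage n. -/
noncomputable def dd (ω : ℕ → Bool) : ℕ → ℤ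
  | 0 => 0
  | n + 1 => cseq ω (n + 1) + 2 ^ n

/-- largest nonpositive integer congruent to d mod P -/
def neg0 (d P : ℤ) : ℤ := -((-d) % P)
/-- smallest positive integer congruent to d mod P -/
def pos1 (d P : ℤ) : ℤ := (d - 1) % P + 1

lemma neg0_nonpos (d P : ℤ) (hP : 0 < P) : neg0 d P ≤ 0 := by
  have := Int.emod_nonneg (-d) (ne_of_gt hP)
  simp only [neg0]; omega

lemma neg0_gt (d P : ℤ) (hP : 0 < P) : -P < neg0 d P := by
  have := Int.emod_lt_of_pos (-d) hP
  simp only [neg0]; omega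

lemma neg0_dvd (d P : ℤ) : P ∣ neg0 d P - d := by
  refine ⟨(-d) / P, ?_⟩
  simp only [neg0]
  rw [Int.emod_def]
  ring

lemma pos1_pos (d P : ℤ) (hP : 0 < P) : 1 ≤ pos1 d P := by
  have := Int.emod_nonneg (d - 1) (ne_of_gt hP)
  simp only [pos1]; omega

lemma pos1_le (d P : ℤ) (hP : 0 < P) : pos1 d P ≤ P := by
  have := Int.emod_lt_of_pos (d - 1) hP
  simp only [pos1]; omega

lemma pos1_dvd (d P : ℤ) : P ∣ pos1 d P - d := by
  refine ⟨-((d - 1) / P), ?_⟩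
  simp only [pos1]
  rw [Int.emod_def]
  ring

lemma neg0_greatest (d P : ℤ) (hP : 0 < P) :
    IsGreatest {m : ℤ | m ≤ 0 ∧ P ∣ m - d} (neg0 d P) := by
  constructor
  · exact ⟨neg0_nonpos d P hP, neg0_dvd d P⟩
  · rintro m ⟨hm0, hmd⟩
    by_contra hlt
    push_neg at hlt
    have hdvd : P ∣ m - neg0 d P := by
      have := hmd.sub (neg0_dvd d P)
      convert this using 1; rfl; ring
    have h1 : 0 < m - neg0 d P := by omega
    have h2 : P ≤ m - neg0 d P := Int.le_of_dvd h1 hdvd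
    have := neg0_gt d P hP
    omega

lemma pos1_least (d P : ℤ) (hP : 0 < P) :
    IsLeast {m : ℤ | 1 ≤ m ∧ P ∣ m - d} (pos1 d P) := by
  constructor
  · exact ⟨pos1_pos d P hP, pos1_dvd d P⟩
  · rintro m ⟨hm1, hmd⟩
    by_contra hlt
    push_neg at hlt
    have hdvd : P ∣ pos1 d P - m := by
      have := (pos1_dvd d P).sub hmd
      convert this using 1; rfl; ring
    have h1 : 0 < pos1 d P - m := by omega
    have h2 : P ≤ pos1 d P - m := Int.le_of_dvd h1 hdvd
    have := pos1_le d P hP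
    omega

/-- Given the inductive description of the uncovered set at stage n, compute `cseq ω (n+1)`. -/
lemma cseq_succ_of_iff (ω : ℕ → Bool) (n : ℕ)
    (hiff : ∀ m : ℤ, (∀ k, 1 ≤ k → k ≤ n → ¬ (2 ^ k : ℤ) ∣ (m - cseq ω k)) ↔
      (2 ^ n : ℤ) ∣ (m - dd ω n)) :
    cseq ω (n + 1) =
      if ω n = false then neg0 (dd ω n) (2 ^ n) else pos1 (dd ω n) (2 ^ n) := by
  have hP : (0:ℤ) < 2 ^ n := by positivity
  have hset1 : {m : ℤ | m ≤ 0 ∧ ∀ k, 1 ≤ k → k ≤ n → ¬ (2 ^ k : ℤ) ∣ (m - cseq ω k)} =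
      {m : ℤ | m ≤ 0 ∧ (2 ^ n : ℤ) ∣ (m - dd ω n)} := by
    ext m; simp only [Set.mem_setOf_eq, hiff]
  have hset2 : {m : ℤ | 1 ≤ m ∧ ∀ k, 1 ≤ k → k ≤ n → ¬ (2 ^ k : ℤ) ∣ (m - cseq ω k)} =
      {m : ℤ | 1 ≤ m ∧ (2 ^ n : ℤ) ∣ (m - dd ω n)} := by
    ext m; simp only [Set.mem_setOf_eq, hiff]
  rw [cseq]
  by_cases hω : ω n = false
  · simp only [hω, if_true, reduceIte]
    rw [hset1]
    exact (neg0_greatest (dd ω n) (2 ^ n) hP).csSup_eq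
  · simp only [hω, if_false, reduceIte]
    rw [hset2]
    exact (pos1_least (dd ω n) (2 ^ n) hP).csInf_eq

lemma key (ω : ℕ → Bool) : ∀ n : ℕ, ∀ m : ℤ,
    (∀ k, 1 ≤ k → k ≤ n → ¬ (2 ^ k : ℤ) ∣ (m - cseq ω k)) ↔ (2 ^ n : ℤ) ∣ (m - dd ω n) := by
  intro n
  induction n with
  | zero =>
    intro m
    constructor
    · intro _; simp [dd]
    · intro _ k hk1 hk0 _; omega
  | succ n ih =>
    intro m
    have hP : (0:ℤ) < 2 ^ n := by positivity
    have hform := cseq_succ_of_iff ω n ih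
    -- c_{n+1} ≡ dd n  mod 2^n
    have hcd : (2 ^ n : ℤ) ∣ (cseq ω (n + 1) - dd ω n) := by
      rw [hform]
      by_cases hω : ω n = false
      · simp only [hω, reduceIte]; exact neg0_dvd _ _
      · simp only [hω, reduceIte]; exact pos1_dvd _ _
    have hdd : dd ω (n + 1) = cseq ω (n + 1) + 2 ^ n := rfl
    constructor
    · intro hunc
      have h1 : (2 ^ n : ℤ) ∣ (m - dd ω n) := (ih m).mp (fun k hk1 hkn => hunc k hk1 (by omega))
      have h2 : ¬ (2 ^ (n + 1) : ℤ) ∣ (m - cseq ω (n + 1)) := hunc (n + 1) (by omega) le_rfl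
      have h3 : (2 ^ n : ℤ) ∣ (m - cseq ω (n + 1)) := by
        have := h1.sub hcd; convert this using 1; rfl; ring
      obtain ⟨y, hy⟩ := h3
      rcases Int.even_or_odd y with ⟨z, hz⟩ | ⟨z, hz⟩
      · exfalso; apply h2; exact ⟨z, by rw [hy, hz]; ring⟩
      · refine ⟨z, ?_⟩
        rw [hdd]
        have h4 : m - cseq ω (n + 1) = 2 ^ n * (2 * z + 1) := by rw [hy, hz]
        have e : (2 : ℤ) ^ (n + 1) * z = 2 ^ n * (2 * z + 1) - 2 ^ n := by ring
        rw [e]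
        linarith [h4]
    · rintro ⟨y, hy⟩
      rw [hdd] at hy
      have hx : m - cseq ω (n + 1) = 2 ^ n * (2 * y + 1) := by
        have e : (2 : ℤ) ^ n * (2 * y + 1) = 2 ^ (n + 1) * y + 2 ^ n := by ring
        rw [e]; linarith [hy]
      intro k hk1 hkn1
      rcases Nat.lt_or_ge k (n + 1) with hk | hk
      · -- k ≤ n : use ih
        have h1 : (2 ^ n : ℤ) ∣ (m - dd ω n) := by
          have h3 : (2 ^ n : ℤ) ∣ (m - cseq ω (n + 1)) := ⟨2 * y + 1, hx⟩
          have := h3.add hcd; convert this using 1; rfl; ring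
        exact (ih m).mpr h1 k hk1 (by omega)
      · -- k = n + 1
        have hk' : k = n + 1 := by omega
        subst hk'
        rintro ⟨z, hz⟩
        have hne : (2:ℤ) ^ n ≠ 0 := by positivity
        have h4 : (2:ℤ) ^ n * (2 * y + 1) = 2 ^ n * (2 * z) := by
          rw [← hx, hz]; ring
        have h5 : (2 * y + 1 : ℤ) = 2 * z := mul_left_cancel₀ hne h4
        omega

lemma cform (ω : ℕ → Bool) (n : ℕ) :
    cseq ω (n + 1) =
      if ω n = false then neg0 (dd ω n) (2 ^ n) else pos1 (dd ω n) (2 ^ n) :=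
  cseq_succ_of_iff ω n (key ω n)

lemma hcd (ω : ℕ → Bool) (n : ℕ) : (2 ^ n : ℤ) ∣ (cseq ω (n + 1) - dd ω n) := by
  rw [cform]
  by_cases hω : ω n = false
  · simp only [hω, reduceIte]; exact neg0_dvd _ _
  · simp only [hω, reduceIte]; exact pos1_dvd _ _

lemma nested (ω : ℕ → Bool) (n : ℕ) : ∀ m, n ≤ m → (2 ^ n : ℤ) ∣ (dd ω m - dd ω n) := by
  intro m hm
  induction m, hm using Nat.le_induction with
  | base => simp
  | succ m hm ih =>
    have h1 : (2 ^ m : ℤ) ∣ (dd ω (m + 1) - dd ω m) := by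
      have e : dd ω (m + 1) = cseq ω (m + 1) + 2 ^ m := rfl
      rw [e]
      have := (hcd ω m).add (dvd_refl ((2:ℤ) ^ m))
      convert this using 1; rfl; ring
    have h2 : (2 ^ n : ℤ) ∣ (dd ω (m + 1) - dd ω m) :=
      dvd_trans (pow_dvd_pow 2 hm) h1
    have := h2.add ih
    convert this using 1; rfl; ring

lemma stab_true (ω : ℕ → Bool) (N : ℕ) (hN : ∀ n, N ≤ n → ω n = true) :
    ∀ n, N ≤ n → (2 ^ n : ℤ) ∣ (neg0 (dd ω N) (2 ^ N) - dd ω n) ∧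
      (-(2 ^ n : ℤ) < neg0 (dd ω N) (2 ^ N) ∧ neg0 (dd ω N) (2 ^ N) ≤ 0) := by
  set t := neg0 (dd ω N) (2 ^ N) with ht
  intro n hn
  induction n, hn using Nat.le_induction with
  | base =>
    have hP : (0:ℤ) < 2 ^ N := by positivity
    exact ⟨neg0_dvd _ _, neg0_gt _ _ hP, neg0_nonpos _ _ hP⟩
  | succ n hn ih =>
    obtain ⟨hdvd, hlt, hle⟩ := ih
    have hP : (0:ℤ) < 2 ^ n := by positivity
    have hc : cseq ω (n + 1) = pos1 (dd ω n) (2 ^ n) := by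
      rw [cform]; simp [hN n hn]
    have hc1 : 1 ≤ cseq ω (n + 1) := hc ▸ pos1_pos _ _ hP
    have hc2 : cseq ω (n + 1) ≤ 2 ^ n := hc ▸ pos1_le _ _ hP
    have hddn : dd ω (n + 1) = cseq ω (n + 1) + 2 ^ n := rfl
    -- x := t - dd (n+1) is divisible by 2^n and lies in (-3·2^n, -2^n]
    have h2 : (2:ℤ) ^ (n + 1) = 2 ^ n * 2 := by ring
    have hxd : (2 ^ n : ℤ) ∣ (t - dd ω (n + 1)) := by
      have h1 : (2 ^ n : ℤ) ∣ (dd ω (n + 1) - dd ω n) := by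
        rw [hddn]
        have := (hcd ω n).add (dvd_refl ((2:ℤ) ^ n))
        convert this using 1; rfl; ring
      have := hdvd.sub h1
      convert this using 1; rfl; ring
    have hzd : (2 ^ n : ℤ) ∣ (t - dd ω (n + 1) + 2 ^ (n + 1)) :=
      hxd.add ⟨2, h2⟩
    have hz0 : t - dd ω (n + 1) + 2 ^ (n + 1) = 0 := by
      apply Int.eq_zero_of_abs_lt_dvd hzd
      rw [abs_lt, hddn]
      omega
    rw [hddn] at hz0
    refine ⟨⟨-1, by rw [hddn]; omega⟩, by omega, hle⟩

lemma stab_false (ω : ℕ → Bool) (N : ℕ) (hN : ∀ n, N ≤ n → ω n = false) :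
    ∀ n, N ≤ n → (2 ^ n : ℤ) ∣ (pos1 (dd ω N) (2 ^ N) - dd ω n) ∧
      (1 ≤ pos1 (dd ω N) (2 ^ N) ∧ pos1 (dd ω N) (2 ^ N) ≤ 2 ^ n) := by
  set t := pos1 (dd ω N) (2 ^ N) with ht
  intro n hn
  induction n, hn using Nat.le_induction with
  | base =>
    have hP : (0:ℤ) < 2 ^ N := by positivity
    exact ⟨pos1_dvd _ _, pos1_pos _ _ hP, pos1_le _ _ hP⟩
  | succ n hn ih =>
    obtain ⟨hdvd, h1t, h2t⟩ := ih
    have hP : (0:ℤ) < 2 ^ n := by positivity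
    have hc : cseq ω (n + 1) = neg0 (dd ω n) (2 ^ n) := by
      rw [cform]; simp [hN n hn]
    have hc1 : -(2 ^ n : ℤ) < cseq ω (n + 1) := hc ▸ neg0_gt _ _ hP
    have hc2 : cseq ω (n + 1) ≤ 0 := hc ▸ neg0_nonpos _ _ hP
    have hddn : dd ω (n + 1) = cseq ω (n + 1) + 2 ^ n := rfl
    have h2 : (2:ℤ) ^ (n + 1) = 2 ^ n * 2 := by ring
    have hxd : (2 ^ n : ℤ) ∣ (t - dd ω (n + 1)) := by
      have h1 : (2 ^ n : ℤ) ∣ (dd ω (n + 1) - dd ω n) := by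
        rw [hddn]
        have := (hcd ω n).add (dvd_refl ((2:ℤ) ^ n))
        convert this using 1; rfl; ring
      have := hdvd.sub h1
      convert this using 1; rfl; ring
    have hz0 : t - dd ω (n + 1) = 0 := by
      apply Int.eq_zero_of_abs_lt_dvd hxd
      rw [abs_lt, hddn]
      omega
    refine ⟨by rw [hz0]; exact dvd_zero _, h1t, ?_⟩
    rw [hddn] at hz0
    omega

/-- In a covered stage j, no earlier stage k < j can also cover m. -/
lemma disj (ω : ℕ → Bool) {m : ℤ} {k j : ℕ} (hk : 1 ≤ k) (hkj : k < j)
    (h1 : (2 ^ k : ℤ) ∣ (m - cseq ω k)) : ¬ (2 ^ j : ℤ) ∣ (m - cseq ω j) := by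
  intro hj
  obtain ⟨j', rfl⟩ : ∃ j', j = j' + 1 := ⟨j - 1, by omega⟩
  have hkj' : k ≤ j' := by omega
  have h2 : (2 ^ j' : ℤ) ∣ (m - cseq ω (j' + 1)) :=
    dvd_trans (pow_dvd_pow 2 (Nat.le_succ j')) hj
  have h3 : (2 ^ j' : ℤ) ∣ (m - dd ω j') := by
    have := h2.add (hcd ω j')
    convert this using 1; rfl; ring
  exact (key ω j' m).mpr h3 k hk hkj' h1

theorem unique_uncovered_of_finitely_many_zeros_or_ones (ω : ℕ → Bool)
    (h : (∃ N : ℕ, ∀ n, N ≤ n → ω n = true) ∨ (∃ N : ℕ, ∀ n, N ≤ n → ω n = false)) :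
    ∃ t : ℤ, (∀ k : ℕ, 1 ≤ k → ¬ (2 ^ k : ℤ) ∣ (t - cseq ω k)) ∧
      ∀ m : ℤ, m ≠ t → ∃! k : ℕ, 1 ≤ k ∧ (2 ^ k : ℤ) ∣ (m - cseq ω k) := by
  -- obtain t with: ∀ n, 2^n ∣ t - dd ω n
  obtain ⟨t, ht⟩ : ∃ t : ℤ, ∀ n, (2 ^ n : ℤ) ∣ (t - dd ω n) := by
    have : ∃ t : ℤ, ∃ N : ℕ, ∀ n, N ≤ n → (2 ^ n : ℤ) ∣ (t - dd ω n) := by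
      rcases h with ⟨N, hN⟩ | ⟨N, hN⟩
      · exact ⟨neg0 (dd ω N) (2 ^ N), N, fun n hn => (stab_true ω N hN n hn).1⟩
      · exact ⟨pos1 (dd ω N) (2 ^ N), N, fun n hn => (stab_false ω N hN n hn).1⟩
    obtain ⟨t, N, hN⟩ := this
    refine ⟨t, fun n => ?_⟩
    have hM : (2 ^ (max n N) : ℤ) ∣ (t - dd ω (max n N)) := hN _ (le_max_right n N)
    have h1 : (2 ^ n : ℤ) ∣ (t - dd ω (max n N)) :=
      dvd_trans (pow_dvd_pow 2 (le_max_left n N)) hM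
    have h2 := nested ω n (max n N) (le_max_left n N)
    have := h1.add h2
    convert this using 1; rfl; ring
  refine ⟨t, ?_, ?_⟩
  · intro k hk
    exact (key ω k t).mpr (ht k) k hk le_rfl
  · intro m hm
    have hex : ∃ k : ℕ, 1 ≤ k ∧ (2 ^ k : ℤ) ∣ (m - cseq ω k) := by
      by_contra h'
      push_neg at h'
      have hall : ∀ n, (2 ^ n : ℤ) ∣ (m - dd ω n) := fun n =>
        (key ω n m).mp (fun k hk1 _ => h' k hk1)
      have hmt : ∀ n : ℕ, (2 ^ n : ℤ) ∣ (m - t) := by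
        intro n
        have := (hall n).sub (ht n)
        convert this using 1; rfl; ring
      apply hm
      have h0 : m - t = 0 := by
        set a := (m - t).natAbs with ha
        apply Int.eq_zero_of_abs_lt_dvd (hmt (a + 1))
        have h1 : a < 2 ^ (a + 1) := lt_of_lt_of_le (Nat.lt_two_pow_self (n := a))
          (Nat.pow_le_pow_right (by norm_num) (Nat.le_succ a))
        calc |m - t| = (a : ℤ) := (Int.abs_eq_natAbs _)
          _ < (2 ^ (a+1) : ℕ) := by exact_mod_cast h1
          _ = (2 : ℤ) ^ (a+1) := by push_cast; ring
      omega
    obtain ⟨k, hk1, hk2⟩ := hex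
    refine ⟨k, ⟨hk1, hk2⟩, ?_⟩
    rintro j ⟨hj1, hj2⟩
    rcases lt_trichotomy k j with hlt | heq | hgt
    · exact absurd hj2 (disj ω hk1 hlt hk2)
    · exact heq.symm
    · exact absurd hk2 (disj ω hj1 hgt hj2)
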